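/- For n ≥ 2 and 0 < β < 1, ∫_{H^n} |u_β|^{2n/(n-2k)} dV_h = 2^n ω_{n-1} ∫_0^{√((1+β)/(1-β))} z^{n-1}(1+z^2)^{-n} dz, where u_β(r) = (1-β^2)^{(n-2k)/4}(cosh r - β)^{k-n/2} is the radial function on hyperbolic n-space and ω_{n-1} is the surface area of the unit sphere S^{n-1}. -/

import Mathlib

open MeasureTheory

/-- Surface area of the unit `m`-sphere `S^m ⊂ ℝ^{m+1}`: `ω_m = 2 π^{(m+1)/2} / Γ((m+1)/2)`. -/
noncomputable def sphereArea (m : ℕ) : ℝ :=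
  2 * Real.pi ^ (((m : ℝ) + 1) / 2) / Real.Gamma (((m : ℝ) + 1) / 2)

lemma alg_aux (m : ℕ) (Z γ c s W : ℝ) (hγ : γ ≠ 0) (hc : c ≠ 0) (hW : W ≠ 0) :
    (Z * γ) ^ (m + 1) * ((γ * W) ^ (m + 1))⁻¹ * (2 * s * c) ^ m
      = 2 ^ (m + 1) * (Z / (2 * c ^ 2) * ((Z * (s / c)) ^ m * ((W / c ^ 2) ^ (m + 1))⁻¹)) := by
  rw [mul_pow Z γ, mul_pow γ W, mul_pow (2*s) c, mul_pow 2 s, div_pow W,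
    mul_pow Z (s/c), div_pow s c, ← pow_mul c 2 (m+1)]
  field_simp
  ring

lemma pointwise_aux (m k : ℕ) (hnk : 2 * k < m + 1) (β Z : ℝ) (hβ0 : 0 < β) (hβ1 : β < 1)
    (hZ : Z = Real.sqrt ((1 + β) / (1 - β))) (r : ℝ) (hr : 0 < r) :
    |(1 - β ^ 2) ^ ((((m + 1 : ℕ) : ℝ) - 2 * k) / 4) *
        (Real.cosh r - β) ^ ((k : ℝ) - ((m + 1 : ℕ) : ℝ) / 2)| ^
        (2 * ((m + 1 : ℕ) : ℝ) / (((m + 1 : ℕ) : ℝ) - 2 * k)) *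
      Real.sinh r ^ (m + 1 - 1)
    = 2 ^ (m + 1) * (|Z / (2 * Real.cosh (r / 2) ^ 2)| *
        ((Z * (Real.sinh (r / 2) / Real.cosh (r / 2))) ^ (m + 1 - 1) *
          (1 + (Z * (Real.sinh (r / 2) / Real.cosh (r / 2))) ^ 2) ^ (-((m + 1 : ℕ) : ℝ)))) := by
  have h1β : (0:ℝ) < 1 - β := by linarith
  have hZ0 : 0 < Z := by rw [hZ]; exact Real.sqrt_pos.mpr (by positivity)
  have hZsq : Z ^ 2 = (1 + β) / (1 - β) := by rw [hZ]; exact Real.sq_sqrt (by positivity)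
  have hZβ : Z ^ 2 * (1 - β) = 1 + β := by rw [hZsq]; field_simp
  set c := Real.cosh (r / 2) with hcdef
  set s := Real.sinh (r / 2) with hsdef
  have hc0 : 0 < c := Real.cosh_pos _
  have hs0 : 0 < s := Real.sinh_pos_iff.mpr (by linarith)
  have h1 : c ^ 2 - s ^ 2 = 1 := Real.cosh_sq_sub_sinh_sq _
  have hA : (0:ℝ) < 1 - β ^ 2 := by nlinarith
  have hB : 0 < Real.cosh r - β := by have := Real.one_le_cosh r; linarith
  have hmk : (2 * k : ℝ) < (m : ℝ) + 1 := by exact_mod_cast hnk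
  have hne : ((m : ℝ) + 1) - 2 * k ≠ 0 := by linarith
  have hW : (0:ℝ) < c ^ 2 + Z ^ 2 * s ^ 2 := by positivity
  have hcosh : Real.cosh r = c ^ 2 + s ^ 2 := by
    rw [hcdef, hsdef, ← Real.cosh_two_mul]; congr 1; ring
  have hsinh : Real.sinh r = 2 * s * c := by
    rw [hcdef, hsdef, ← Real.sinh_two_mul]; congr 1; ring
  have hBW : Real.cosh r - β = (1 - β) * (c ^ 2 + Z ^ 2 * s ^ 2) := by
    rw [hcosh]; linear_combination (-(s^2)) * hZβ + β * h1
  have hPfrac : 1 + (Z * (s / c)) ^ 2 = (c ^ 2 + Z ^ 2 * s ^ 2) / c ^ 2 := by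
    field_simp
  push_cast
  rw [abs_of_pos (by positivity :
    (0:ℝ) < (1 - β ^ 2) ^ (((m:ℝ) + 1 - 2 * k) / 4) * (Real.cosh r - β) ^ ((k:ℝ) - ((m:ℝ)+1)/2))]
  rw [Real.mul_rpow (Real.rpow_nonneg hA.le _) (Real.rpow_nonneg hB.le _),
      ← Real.rpow_mul hA.le, ← Real.rpow_mul hB.le]
  rw [show (((m:ℝ) + 1) - 2 * k) / 4 * (2 * ((m:ℝ)+1) / (((m:ℝ)+1) - 2 * k)) = ((m:ℝ)+1)/2 by
        field_simp; ring]
  rw [show ((k:ℝ) - ((m:ℝ)+1)/2) * (2 * ((m:ℝ)+1) / (((m:ℝ)+1) - 2 * k)) = -((m:ℝ)+1) by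
        rw [mul_div_assoc', div_eq_iff hne]; ring]
  have hcast : ((m:ℝ) + 1) = ((m + 1 : ℕ) : ℝ) := by push_cast; ring
  have hD : (1 - β ^ 2) ^ (((m:ℝ)+1)/2) = (Z * (1 - β)) ^ (m + 1) := by
    have hsq : (Z * (1 - β)) ^ 2 = 1 - β ^ 2 := by
      rw [mul_pow, hZsq]; field_simp; ring
    have h2 : (0:ℝ) ≤ Z * (1 - β) := by positivity
    calc (1 - β ^ 2) ^ (((m:ℝ)+1)/2) = ((Z * (1 - β)) ^ (2:ℕ)) ^ (((m:ℝ)+1)/2) := by rw [hsq]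
      _ = ((Z * (1 - β)) ^ ((2:ℕ):ℝ)) ^ (((m:ℝ)+1)/2) := by rw [Real.rpow_natCast]
      _ = (Z * (1 - β)) ^ (((2:ℕ):ℝ) * (((m:ℝ)+1)/2)) := by rw [← Real.rpow_mul h2]
      _ = (Z * (1 - β)) ^ (((m + 1:ℕ)):ℝ) := by congr 1; push_cast; ring
      _ = (Z * (1 - β)) ^ (m + 1) := Real.rpow_natCast _ _
  rw [hD, hcast, Real.rpow_neg hB.le, Real.rpow_natCast,
      Real.rpow_neg (by positivity), Real.rpow_natCast]
  rw [abs_of_pos (by positivity : (0:ℝ) < Z / (2 * c ^ 2)), hBW, hsinh, hPfrac]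
  exact alg_aux m Z (1 - β) c s (c ^ 2 + Z ^ 2 * s ^ 2) h1β.ne' hc0.ne' hW.ne'

theorem lq_norm_of_extremal (n k : ℕ) (hn : 2 ≤ n) (hk : 0 < k) (hnk : 2 * k < n)
    (β : ℝ) (hβ0 : 0 < β) (hβ1 : β < 1) :
    sphereArea (n - 1) *
        ∫ r in Set.Ioi (0 : ℝ),
          |(1 - β ^ 2) ^ (((n : ℝ) - 2 * k) / 4) *
              (Real.cosh r - β) ^ ((k : ℝ) - (n : ℝ) / 2)| ^ (2 * (n : ℝ) / ((n : ℝ) - 2 * k)) *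
            Real.sinh r ^ (n - 1)
      = 2 ^ n * sphereArea (n - 1) *
          ∫ z in (0 : ℝ)..(Real.sqrt ((1 + β) / (1 - β))),
            z ^ (n - 1) * (1 + z ^ 2) ^ (-(n : ℝ)) := by
  have h1β : (0:ℝ) < 1 - β := by linarith
  set Z := Real.sqrt ((1 + β) / (1 - β)) with hZdef
  have hZ0 : 0 < Z := Real.sqrt_pos.mpr (by positivity)
  set f : ℝ → ℝ := fun r => Z * (Real.sinh (r / 2) / Real.cosh (r / 2)) with hfdef
  set g : ℝ → ℝ := fun z => z ^ (n - 1) * (1 + z ^ 2) ^ (-(n : ℝ)) with hgdef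
  -- image
  have himg : f '' Set.Ioi 0 = Set.Ioo 0 Z := by
    apply Set.Subset.antisymm
    · rintro _ ⟨r, hr, rfl⟩
      have hr' : (0:ℝ) < r := hr
      have hs : 0 < Real.sinh (r / 2) := Real.sinh_pos_iff.mpr (by linarith)
      have hc : 0 < Real.cosh (r / 2) := Real.cosh_pos _
      refine ⟨by positivity, ?_⟩
      have hlt : Real.sinh (r / 2) < Real.cosh (r / 2) := by
        have h := Real.cosh_sub_sinh (r / 2)
        nlinarith [Real.exp_pos (-(r / 2))]
      calc f r = Z * (Real.sinh (r/2) / Real.cosh (r/2)) := rfl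
        _ < Z * 1 := by
            apply mul_lt_mul_of_pos_left _ hZ0
            rw [div_lt_one hc]; exact hlt
        _ = Z := mul_one Z
    · rintro z ⟨hz0, hzZ⟩
      set t := z / Z with htdef
      have ht0 : 0 < t := div_pos hz0 hZ0
      have ht1 : t < 1 := (div_lt_one hZ0).mpr hzZ
      have h1t : (0:ℝ) < 1 - t := by linarith
      set u := Real.sqrt ((1 + t) / (1 - t)) with hudef
      have hu0 : 0 < u := Real.sqrt_pos.mpr (by positivity)
      have husq : u ^ 2 = (1 + t) / (1 - t) := Real.sq_sqrt (by positivity)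
      have hu1 : 1 < u := by
        have h2 : (1:ℝ) < u ^ 2 := by
          rw [husq, lt_div_iff₀ h1t]; linarith
        nlinarith
      refine ⟨2 * Real.log u, Set.mem_Ioi.mpr (by have := Real.log_pos hu1; linarith), ?_⟩
      · show Z * (Real.sinh ((2 * Real.log u) / 2) / Real.cosh ((2 * Real.log u) / 2)) = z
        rw [show (2 * Real.log u) / 2 = Real.log u by ring, Real.sinh_eq, Real.cosh_eq,
          Real.exp_neg, Real.exp_log hu0]
        have husq' : u ^ 2 * (1 - t) = 1 + t := by rw [husq]; field_simp
        have hz : z = Z * t := by rw [htdef]; field_simp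
        clear_value u
        clear_value t
        rw [hz]
        congr 1
        have hden : (0:ℝ) < u + u⁻¹ := by positivity
        field_simp
        linear_combination husq'
  -- derivative
  have hderiv : ∀ r ∈ Set.Ioi (0:ℝ),
      HasDerivWithinAt f (Z / (2 * Real.cosh (r / 2) ^ 2)) (Set.Ioi 0) r := by
    intro r _
    have hc : Real.cosh (r / 2) ≠ 0 := (Real.cosh_pos _).ne'
    have h2 : HasDerivAt (fun x : ℝ => x / 2) (1 / 2) r := (hasDerivAt_id r).div_const 2
    have hsi : HasDerivAt (fun x : ℝ => Real.sinh (x / 2)) (Real.cosh (r / 2) * (1 / 2)) r :=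
      by have := (Real.hasDerivAt_sinh (r / 2)).comp r h2; exact this
    have hco : HasDerivAt (fun x : ℝ => Real.cosh (x / 2)) (Real.sinh (r / 2) * (1 / 2)) r :=
      by have := (Real.hasDerivAt_cosh (r / 2)).comp r h2; exact this
    have hdiv := (hsi.div hco hc).const_mul Z
    have heq : Z * ((Real.cosh (r/2) * (1/2) * Real.cosh (r/2) -
        Real.sinh (r/2) * (Real.sinh (r/2) * (1/2))) / Real.cosh (r/2) ^ 2)
        = Z / (2 * Real.cosh (r / 2) ^ 2) := by
      have h1 := Real.cosh_sq_sub_sinh_sq (r / 2)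
      rw [show Real.cosh (r/2) * (1/2) * Real.cosh (r/2) -
          Real.sinh (r/2) * (Real.sinh (r/2) * (1/2))
          = (Real.cosh (r/2) ^ 2 - Real.sinh (r/2) ^ 2) / 2 by ring, h1]
      field_simp
    rw [heq] at hdiv
    exact hdiv.hasDerivWithinAt
  -- injectivity
  have hinj : Set.InjOn f (Set.Ioi 0) := by
    intro a _ b _ hab
    have hca : Real.cosh (a / 2) ≠ 0 := (Real.cosh_pos _).ne'
    have hcb : Real.cosh (b / 2) ≠ 0 := (Real.cosh_pos _).ne'
    have hab' : Real.sinh (a/2) / Real.cosh (a/2) = Real.sinh (b/2) / Real.cosh (b/2) :=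
      mul_left_cancel₀ hZ0.ne' hab
    have h0 : Real.sinh (a / 2 - b / 2) = 0 := by
      rw [Real.sinh_sub]
      field_simp at hab'
      linarith [hab']
    have := Real.sinh_eq_zero.mp h0
    linarith
  have hcv := integral_image_eq_integral_abs_deriv_smul measurableSet_Ioi hderiv hinj g
  rw [himg] at hcv
  have hIoc : (∫ z in (0:ℝ)..Z, g z) = ∫ z in Set.Ioo (0:ℝ) Z, g z := by
    rw [intervalIntegral.integral_of_le hZ0.le, integral_Ioc_eq_integral_Ioo]
  obtain ⟨m, rfl⟩ : ∃ m, n = m + 1 := ⟨n - 1, by omega⟩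
  have hI : (∫ r in Set.Ioi (0 : ℝ),
          |(1 - β ^ 2) ^ ((((m+1:ℕ) : ℝ) - 2 * k) / 4) *
              (Real.cosh r - β) ^ ((k : ℝ) - ((m+1:ℕ) : ℝ) / 2)| ^
                (2 * ((m+1:ℕ) : ℝ) / (((m+1:ℕ) : ℝ) - 2 * k)) *
            Real.sinh r ^ (m + 1 - 1))
      = ∫ r in Set.Ioi (0:ℝ), (2:ℝ) ^ (m+1) * (|Z / (2 * Real.cosh (r / 2) ^ 2)| • g (f r)) := by
    apply setIntegral_congr_fun measurableSet_Ioi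
    intro r hr
    have := pointwise_aux m k hnk β Z hβ0 hβ1 hZdef r hr
    simpa [hgdef, hfdef, smul_eq_mul] using this
  rw [hI, integral_const_mul, ← hcv, ← hIoc]
  ring
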